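/- Decoder correctness: for every codeword x ∈ C_{q,ℓ,r}(n) and every string z that is an output of x under the (ℓ,r)-0-insertion channel, f(z) = x. Moreover, for a run of zeros of length u, the reduced run length computed by f equals L(i,j) where i is the unique integer in {1,…,ℓ} with i ≡ u+1 (mod ℓ) and j = ⌊log_{rℓ+1}((r(u+1)+1)/(r i+1))⌋. -/

import Mathlib

namespace ZeroErrorDup

/-- Output relation of the (ℓ,r)-0-insertion channel acting on strings over the
alphabet A_q = {0,1,…,q−1} (encoded as lists of naturals): after each input symbol,
`c` copies of the block `0^ℓ` are inserted, for some `c ∈ {0,1,…,r}`. -/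
inductive IsOutput (ℓ r : ℕ) : List ℕ → List ℕ → Prop
  | nil : IsOutput ℓ r [] []
  | cons (a : ℕ) (c : ℕ) (hc : c ≤ r) {x y : List ℕ} :
      IsOutput ℓ r x y → IsOutput ℓ r (a :: x) (a :: (List.replicate (c * ℓ) 0 ++ y))

/-- Two strings are confusable if some string is an output of both. -/
def Confusable (ℓ r : ℕ) (x y : List ℕ) : Prop :=
  ∃ z, IsOutput ℓ r x z ∧ IsOutput ℓ r y z

/-- A set of strings is a zero-error code if every two distinct elements are
non-confusable. -/
def ZeroErrorCode (ℓ r : ℕ) (C : Set (List ℕ)) : Prop :=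
  ∀ x ∈ C, ∀ y ∈ C, x ≠ y → ¬ Confusable ℓ r x y

/-- `L ℓ r i j = ((r i + 1)(r ℓ + 1)^j − 1)/r − 1` (the division is exact). -/
def L (ℓ r i j : ℕ) : ℕ := ((r * i + 1) * (r * ℓ + 1) ^ j - 1) / r - 1

/-- The block `σ 0^u`: the symbol `σ` followed by a run of `u` zeros. -/
def block (σ u : ℕ) : List ℕ := σ :: List.replicate u 0

/-- `B q ℓ r`: the set of blocks `σ 0^{L(i,j)}` with `σ ∈ {1,…,q−1}`, `1 ≤ i ≤ ℓ`, `j ≥ 0`. -/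
def B (q ℓ r : ℕ) : Set (List ℕ) :=
  { b | ∃ σ i j : ℕ, 1 ≤ σ ∧ σ ≤ q - 1 ∧ 1 ≤ i ∧ i ≤ ℓ ∧ b = block σ (L ℓ r i j) }

/-- `S q n`: strings over `A_q` of length between 1 and `n` whose first symbol is nonzero. -/
def S (q n : ℕ) : Set (List ℕ) :=
  { x | x ≠ [] ∧ x.length ≤ n ∧ (∀ a ∈ x, a < q) ∧ x.headI ≠ 0 }

/-- `C q ℓ r n`: strings in `S q n` that are concatenations of blocks from `B q ℓ r`. -/
def C (q ℓ r n : ℕ) : Set (List ℕ) :=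
  { x | x ∈ S q n ∧ ∃ bs : List (List ℕ), (∀ b ∈ bs, b ∈ B q ℓ r) ∧ x = bs.flatten }

/-- Reduced run length: the largest integer of the form `L ℓ r i j` (with `1 ≤ i ≤ ℓ`,
`j ≥ 0`) that is at most `u` and congruent to `u` modulo `ℓ` (such an integer always
exists). -/
noncomputable def g (ℓ r u : ℕ) : ℕ :=
  sSup { m | (∃ i j : ℕ, 1 ≤ i ∧ i ≤ ℓ ∧ m = L ℓ r i j) ∧ m ≤ u ∧ m % ℓ = u % ℓ }

/-- The map `f`, shortening each maximal run of zeros of length `u` to length `g ℓ r u`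
and leaving all nonzero symbols in place. -/
noncomputable def f (ℓ r : ℕ) (x : List ℕ) : List ℕ :=
  match h : x.dropWhile (· == 0) with
  | [] => List.replicate (g ℓ r (x.takeWhile (· == 0)).length) 0
  | a :: t =>
      List.replicate (g ℓ r (x.takeWhile (· == 0)).length) 0 ++ a :: f ℓ r t
termination_by x.length
decreasing_by
  have h1 : (x.dropWhile (· == 0)).length ≤ x.length :=
    (List.dropWhile_sublist _).length_le
  rw [h] at h1
  simp only [List.length_cons] at h1
  omega


/-! ### Auxiliary lemmas -/

lemma key1 (ℓ r i j : ℕ) (hr : 1 ≤ r) (hi : 1 ≤ i) :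
    r * (L ℓ r i j + 1) + 1 = (r * i + 1) * (r * ℓ + 1) ^ j := by
  have hmod : (r * i + 1) * (r * ℓ + 1) ^ j ≡ 1 [MOD r] := by
    have h1 : (r * i + 1) ≡ 1 [MOD r] := by
      unfold Nat.ModEq; rw [Nat.mul_add_mod]
    have h2 : (r * ℓ + 1) ≡ 1 [MOD r] := by
      unfold Nat.ModEq; rw [Nat.mul_add_mod]
    have := h1.mul (h2.pow j)
    simpa using this
  have hA1 : r + 1 ≤ (r * i + 1) * (r * ℓ + 1) ^ j := by
    have h1 : r + 1 ≤ r * i + 1 := by nlinarith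
    have h2 : 1 ≤ (r * ℓ + 1) ^ j := Nat.one_le_pow _ _ (by omega)
    calc r + 1 ≤ r * i + 1 := h1
      _ = (r * i + 1) * 1 := by ring
      _ ≤ _ := Nat.mul_le_mul le_rfl h2
  have hdvd : r ∣ (r * i + 1) * (r * ℓ + 1) ^ j - 1 :=
    (Nat.modEq_iff_dvd' (by omega)).mp hmod.symm
  obtain ⟨k, hk⟩ := hdvd
  have hL : L ℓ r i j = k - 1 := by
    unfold L
    rw [hk, Nat.mul_div_cancel_left _ (by omega : 0 < r)]
  have hk1 : 1 ≤ k := by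
    rcases Nat.eq_zero_or_pos k with h | h
    · subst h; simp at hk; omega
    · exact h
  rw [hL]
  have h5 : k - 1 + 1 = k := by omega
  rw [h5]
  omega

lemma Lmod (ℓ r i j : ℕ) (hr : 1 ≤ r) (hi : 1 ≤ i) :
    (L ℓ r i j + 1) % ℓ = i % ℓ := by
  have h := key1 ℓ r i j hr hi
  have hpow : (r * ℓ + 1) ^ j ≡ 1 [MOD r * ℓ] := by
    have h0 : (r * ℓ + 1) ≡ 1 [MOD r * ℓ] := by
      unfold Nat.ModEq; rw [Nat.add_mod_left]
    simpa using h0.pow j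
  have h2 : (r * i + 1) * (r * ℓ + 1) ^ j ≡ (r * i + 1) * 1 [MOD r * ℓ] :=
    hpow.mul_left _
  rw [← h] at h2
  have h3 : r * (L ℓ r i j + 1) + 1 ≡ r * i + 1 [MOD r * ℓ] := by simpa using h2
  have h4 : r * (L ℓ r i j + 1) ≡ r * i [MOD r * ℓ] :=
    Nat.ModEq.add_right_cancel' 1 h3
  exact Nat.ModEq.mul_left_cancel' (by omega) h4

lemma Lsucc (ℓ r i j : ℕ) (hr : 1 ≤ r) (hi : 1 ≤ i) :
    L ℓ r i (j + 1) = L ℓ r i j + r * ℓ * (L ℓ r i j + 1) + ℓ := by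
  have h1 := key1 ℓ r i j hr hi
  have h2 := key1 ℓ r i (j + 1) hr hi
  rw [pow_succ, ← mul_assoc, ← h1] at h2
  have h3 : (r * (L ℓ r i j + 1) + 1) * (r * ℓ + 1)
      = r * ((L ℓ r i j + 1) + r * ℓ * (L ℓ r i j + 1) + ℓ) + 1 := by ring
  rw [h3] at h2
  have h4 : L ℓ r i (j + 1) + 1 = (L ℓ r i j + 1) + r * ℓ * (L ℓ r i j + 1) + ℓ :=
    Nat.eq_of_mul_eq_mul_left (by omega : 0 < r) (by omega)
  omega

lemma Lmono (ℓ r i : ℕ) (hr : 1 ≤ r) (hi : 1 ≤ i) {j j' : ℕ} (hj : j ≤ j') :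
    L ℓ r i j ≤ L ℓ r i j' := by
  have h1 := key1 ℓ r i j hr hi
  have h2 := key1 ℓ r i j' hr hi
  have hp : (r * ℓ + 1) ^ j ≤ (r * ℓ + 1) ^ j' := Nat.pow_le_pow_right (by omega) hj
  have hle : r * (L ℓ r i j + 1) + 1 ≤ r * (L ℓ r i j' + 1) + 1 := by
    rw [h1, h2]; exact Nat.mul_le_mul le_rfl hp
  have := Nat.le_of_mul_le_mul_left
    (by omega : r * (L ℓ r i j + 1) ≤ r * (L ℓ r i j' + 1)) (by omega : 0 < r)
  omega

lemma Lle_iff (ℓ r i j u : ℕ) (hr : 1 ≤ r) (hi : 1 ≤ i) :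
    L ℓ r i j ≤ u ↔ (r * i + 1) * (r * ℓ + 1) ^ j ≤ r * (u + 1) + 1 := by
  rw [← key1 ℓ r i j hr hi]
  constructor
  · intro h
    have : r * (L ℓ r i j + 1) ≤ r * (u + 1) := Nat.mul_le_mul le_rfl (by omega)
    omega
  · intro h
    have h2 : r * (L ℓ r i j + 1) ≤ r * (u + 1) := by omega
    have := Nat.le_of_mul_le_mul_left h2 (by omega : 0 < r)
    omega

lemma i_unique (ℓ i i' : ℕ) (hi : 1 ≤ i) (hi2 : i ≤ ℓ) (hi' : 1 ≤ i') (hi'2 : i' ≤ ℓ)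
    (h : i % ℓ = i' % ℓ) : i = i' := by
  rcases Nat.lt_or_ge i ℓ with h1 | h1
  · rcases Nat.lt_or_ge i' ℓ with h2 | h2
    · rw [Nat.mod_eq_of_lt h1, Nat.mod_eq_of_lt h2] at h; exact h
    · rw [Nat.mod_eq_of_lt h1, show i' = ℓ by omega, Nat.mod_self] at h; omega
  · rcases Nat.lt_or_ge i' ℓ with h2 | h2
    · rw [show i = ℓ by omega, Nat.mod_self, Nat.mod_eq_of_lt h2] at h; omega
    · omega

lemma i_le (ℓ i u : ℕ) (hℓ : 1 ≤ ℓ) (hi : 1 ≤ i) (hi2 : i ≤ ℓ)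
    (h : i % ℓ = (u + 1) % ℓ) : i ≤ u + 1 := by
  by_contra hc
  push_neg at hc
  have h1 : u + 1 < ℓ := by omega
  rw [Nat.mod_eq_of_lt h1] at h
  rcases Nat.lt_or_ge i ℓ with h2 | h2
  · rw [Nat.mod_eq_of_lt h2] at h; omega
  · rw [show i = ℓ by omega, Nat.mod_self] at h; omega

lemma g_eq_L (ℓ r i j u : ℕ) (hℓ : 1 ≤ ℓ) (hr : 1 ≤ r) (hi : 1 ≤ i) (hi2 : i ≤ ℓ)
    (hmod : i % ℓ = (u + 1) % ℓ) (hle : L ℓ r i j ≤ u) (hlt : u < L ℓ r i (j + 1)) :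
    g ℓ r u = L ℓ r i j := by
  have hmem : L ℓ r i j ∈
      { m | (∃ i' j' : ℕ, 1 ≤ i' ∧ i' ≤ ℓ ∧ m = L ℓ r i' j') ∧ m ≤ u ∧ m % ℓ = u % ℓ } := by
    refine ⟨⟨i, j, hi, hi2, rfl⟩, hle, ?_⟩
    have h1 : (L ℓ r i j + 1) % ℓ = (u + 1) % ℓ := by rw [Lmod ℓ r i j hr hi, hmod]
    exact Nat.ModEq.add_right_cancel' 1 h1
  have hub : ∀ m ∈ { m | (∃ i' j' : ℕ, 1 ≤ i' ∧ i' ≤ ℓ ∧ m = L ℓ r i' j') ∧ m ≤ u ∧ m % ℓ = u % ℓ },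
      m ≤ L ℓ r i j := by
    rintro m ⟨⟨i', j', hi', hi'2, rfl⟩, hmle, hmmod⟩
    have h1 : (L ℓ r i' j' + 1) % ℓ = (u + 1) % ℓ := Nat.ModEq.add_right 1 hmmod
    have h2 : i' = i := i_unique ℓ i' i hi' hi'2 hi hi2
      (by rw [← Lmod ℓ r i' j' hr hi', h1, hmod])
    subst h2
    have h3 : j' ≤ j := by
      by_contra hc
      push_neg at hc
      have := Lmono ℓ r i' hr hi' (show j + 1 ≤ j' by omega)
      omega
    exact Lmono ℓ r i' hr hi' h3
  unfold g
  exact le_antisymm (csSup_le ⟨_, hmem⟩ hub) (le_csSup ⟨L ℓ r i j, hub⟩ hmem)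

lemma g_formula (ℓ r i u : ℕ) (hℓ : 1 ≤ ℓ) (hr : 1 ≤ r) (hi : 1 ≤ i) (hi2 : i ≤ ℓ)
    (hmod : i % ℓ = (u + 1) % ℓ) :
    g ℓ r u = L ℓ r i (Nat.log (r * ℓ + 1) ((r * (u + 1) + 1) / (r * i + 1))) := by
  set D := (r * (u + 1) + 1) / (r * i + 1) with hD
  set j0 := Nat.log (r * ℓ + 1) D with hj0
  have hb : 1 < r * ℓ + 1 := by nlinarith
  have hiu : i ≤ u + 1 := i_le ℓ i u hℓ hi hi2 hmod
  have hDpos : D ≠ 0 := by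
    have : 1 ≤ D := by
      rw [hD, Nat.le_div_iff_mul_le (by omega : 0 < r * i + 1)]
      have : r * i ≤ r * (u + 1) := Nat.mul_le_mul le_rfl hiu
      omega
    omega
  apply g_eq_L ℓ r i j0 u hℓ hr hi hi2 hmod
  · rw [Lle_iff ℓ r i j0 u hr hi]
    have h1 : (r * ℓ + 1) ^ j0 ≤ D := Nat.pow_log_le_self _ hDpos
    rw [hD, Nat.le_div_iff_mul_le (by omega : 0 < r * i + 1)] at h1
    calc (r * i + 1) * (r * ℓ + 1) ^ j0 = (r * ℓ + 1) ^ j0 * (r * i + 1) := by ring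
      _ ≤ r * (u + 1) + 1 := h1
  · by_contra hc
    push_neg at hc
    rw [Lle_iff ℓ r i (j0 + 1) u hr hi] at hc
    have h1 : (r * ℓ + 1) ^ (j0 + 1) ≤ D := by
      rw [hD, Nat.le_div_iff_mul_le (by omega : 0 < r * i + 1)]
      calc (r * ℓ + 1) ^ (j0 + 1) * (r * i + 1)
          = (r * i + 1) * (r * ℓ + 1) ^ (j0 + 1) := by ring
        _ ≤ r * (u + 1) + 1 := hc
    have h2 : j0 + 1 ≤ j0 := by
      rw [hj0]
      exact (Nat.le_log_iff_pow_le hb hDpos).mpr h1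
    omega

lemma g_decode (ℓ r i j k : ℕ) (hℓ : 1 ≤ ℓ) (hr : 1 ≤ r) (hi : 1 ≤ i) (hi2 : i ≤ ℓ)
    (hk : k ≤ r * (L ℓ r i j + 1)) :
    g ℓ r (L ℓ r i j + k * ℓ) = L ℓ r i j := by
  apply g_eq_L ℓ r i j _ hℓ hr hi hi2
  · rw [show L ℓ r i j + k * ℓ + 1 = (L ℓ r i j + 1) + k * ℓ by ring,
      Nat.add_mul_mod_self_right, Lmod ℓ r i j hr hi]
  · exact Nat.le_add_right _ _
  · rw [Lsucc ℓ r i j hr hi]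
    have h1 : k * ℓ ≤ r * (L ℓ r i j + 1) * ℓ := Nat.mul_le_mul hk le_rfl
    have h2 : r * (L ℓ r i j + 1) * ℓ = r * ℓ * (L ℓ r i j + 1) := by ring
    omega

lemma g_zero (ℓ r : ℕ) : g ℓ r 0 = 0 := by
  have hsub : { m | (∃ i j : ℕ, 1 ≤ i ∧ i ≤ ℓ ∧ m = L ℓ r i j) ∧ m ≤ 0 ∧ m % ℓ = 0 % ℓ }
      ⊆ {0} := by
    intro m hm
    simp only [Set.mem_setOf_eq] at hm
    have : m = 0 := Nat.le_zero.mp hm.2.1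
    simp [this]
  unfold g
  rcases Set.eq_empty_or_nonempty
    { m | (∃ i j : ℕ, 1 ≤ i ∧ i ≤ ℓ ∧ m = L ℓ r i j) ∧ m ≤ 0 ∧ m % ℓ = 0 % ℓ } with he | hne
  · rw [he]; exact csSup_empty
  · exact Nat.le_zero.mp (csSup_le hne (fun b hb => by have := hsub hb; simp at this; omega))

lemma f_nil (ℓ r : ℕ) : f ℓ r [] = [] := by
  rw [f]; simp [g_zero]

lemma f_cons_pos (ℓ r a : ℕ) (ha : a ≠ 0) (t : List ℕ) :
    f ℓ r (a :: t) = a :: f ℓ r t := by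
  have h0 : (a == 0) = false := by simp [ha]
  rw [f]
  split
  next heq => simp [List.dropWhile_cons, h0] at heq
  next b u heq =>
    simp only [List.dropWhile_cons, h0, if_neg] at heq
    cases heq
    simp [List.takeWhile_cons, h0, g_zero]

lemma f_run (ℓ r v : ℕ) (rest : List ℕ) (h : ∀ a ∈ rest.head?, a ≠ 0) :
    f ℓ r (List.replicate v 0 ++ rest) =
      List.replicate (g ℓ r v) 0 ++ f ℓ r rest := by
  match rest with
  | [] =>
    rw [f]
    split
    next heq =>
      simp [List.takeWhile_append, List.takeWhile_replicate, f_nil]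
    next b u heq =>
      exfalso
      simp [List.dropWhile_append, List.dropWhile_replicate] at heq
  | a :: t =>
    have ha : a ≠ 0 := h a (by simp)
    have h0 : (a == 0) = false := by simp [ha]
    have hd : (List.replicate v 0 ++ a :: t).dropWhile (· == 0) = a :: t := by
      simp [List.dropWhile_append, List.dropWhile_replicate, List.dropWhile_cons, h0]
    have ht : (List.replicate v 0 ++ a :: t).takeWhile (· == 0) = List.replicate v 0 := by
      simp [List.takeWhile_append, List.takeWhile_replicate, List.takeWhile_cons, h0]
    rw [f, f_cons_pos ℓ r a ha t]
    split
    next heq => rw [hd] at heq; cases heq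
    next b u heq =>
      rw [hd] at heq
      cases heq
      rw [ht]
      simp

lemma output_head {ℓ r : ℕ} {x z : List ℕ} (h : IsOutput ℓ r x z) : z.head? = x.head? := by
  cases h <;> simp

lemma output_append {ℓ r : ℕ} (x1 : List ℕ) {x2 z : List ℕ}
    (h : IsOutput ℓ r (x1 ++ x2) z) :
    ∃ z1 z2, z = z1 ++ z2 ∧ IsOutput ℓ r x1 z1 ∧ IsOutput ℓ r x2 z2 := by
  induction x1 generalizing z with
  | nil => exact ⟨[], z, rfl, IsOutput.nil, by simpa using h⟩
  | cons a t ih =>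
    rw [List.cons_append] at h
    cases h with
    | cons _ c hc h' =>
      obtain ⟨z1, z2, rfl, hh1, hh2⟩ := ih h'
      exact ⟨a :: (List.replicate (c * ℓ) 0 ++ z1), z2, by simp,
        IsOutput.cons a c hc hh1, hh2⟩

lemma output_zeros {ℓ r : ℕ} : ∀ (m : ℕ) {y : List ℕ},
    IsOutput ℓ r (List.replicate m 0) y →
    ∃ k, k ≤ r * m ∧ y = List.replicate (m + k * ℓ) 0 := by
  intro m
  induction m with
  | zero =>
    intro y h
    cases h
    exact ⟨0, by simp⟩
  | succ m ih =>
    intro y h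
    rw [List.replicate_succ] at h
    cases h with
    | cons _ c hc h' =>
      obtain ⟨k', hk', rfl⟩ := ih h'
      refine ⟨c + k', ?_, ?_⟩
      · have : r * (m + 1) = r * m + r := by ring
        omega
      · have harith : (m + 1) + (c + k') * ℓ = (c * ℓ + (m + k' * ℓ)) + 1 := by ring
        rw [harith, List.replicate_succ, List.replicate_add, List.replicate_add, List.replicate_add]

lemma output_block {ℓ r σ v : ℕ} {z : List ℕ} (h : IsOutput ℓ r (block σ v) z) :
    ∃ k, k ≤ r * (v + 1) ∧ z = block σ (v + k * ℓ) := by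
  unfold block at h ⊢
  cases h with
  | cons _ c hc h' =>
    obtain ⟨k', hk', rfl⟩ := output_zeros v h'
    refine ⟨c + k', ?_, ?_⟩
    · have : r * (v + 1) = r * v + r := by ring
      omega
    · have harith : v + (c + k') * ℓ = c * ℓ + (v + k' * ℓ) := by ring
      rw [harith, List.replicate_add, List.replicate_add, List.replicate_add]

lemma flatten_head {q ℓ r : ℕ} (bs : List (List ℕ)) (hbs : ∀ b ∈ bs, b ∈ B q ℓ r) :
    ∀ a ∈ bs.flatten.head?, a ≠ 0 := by
  match bs with
  | [] => simp
  | b :: bs' =>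
    obtain ⟨σ, i, j, hσ, _, _, _, rfl⟩ := hbs b (by simp)
    rw [List.flatten_cons]
    simp only [block, List.cons_append, List.head?_cons]
    intro a ha
    simp at ha
    omega

lemma main_decode (q ℓ r : ℕ) (hℓ : 1 ≤ ℓ) (hr : 1 ≤ r) :
    ∀ bs : List (List ℕ), (∀ b ∈ bs, b ∈ B q ℓ r) →
      ∀ z, IsOutput ℓ r bs.flatten z → f ℓ r z = bs.flatten := by
  intro bs
  induction bs with
  | nil =>
    intro _ z hz
    simp only [List.flatten_nil] at hz ⊢
    cases hz
    exact f_nil ℓ r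
  | cons b bs ih =>
    intro hB z hz
    obtain ⟨σ, i, j, hσ, _, hi, hi2, rfl⟩ := hB b (by simp)
    rw [List.flatten_cons] at hz
    obtain ⟨z1, z2, rfl, h1, h2⟩ := output_append _ hz
    obtain ⟨k, hk, rfl⟩ := output_block h1
    have hz2head : ∀ a ∈ z2.head?, a ≠ 0 := by
      rw [output_head h2]
      exact flatten_head bs (fun b hb => hB b (by simp [hb]))
    have hσ0 : σ ≠ 0 := by omega
    have hstep : block σ (L ℓ r i j + k * ℓ) ++ z2
        = σ :: (List.replicate (L ℓ r i j + k * ℓ) 0 ++ z2) := by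
      simp [block]
    rw [hstep, f_cons_pos ℓ r σ hσ0, f_run ℓ r _ z2 hz2head,
      g_decode ℓ r i j k hℓ hr hi hi2 hk, ih (fun b hb => hB b (by simp [hb])) z2 h2]
    simp [block]

/-- decoder correctness: for every codeword `x ∈ C q ℓ r n` and every
output `z` of `x` under the (ℓ,r)-0-insertion channel, `f z = x`.  Moreover, for a
run of zeros of length `u` the reduced run length computed by `f` equals `L ℓ r i j`,
where `i ∈ {1,…,ℓ}` is the unique integer with `i ≡ u+1 (mod ℓ)` and
`j = ⌊log_{rℓ+1}((r(u+1)+1)/(r i+1))⌋`. -/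
theorem stmt10 (q ℓ r n : ℕ) (hq : 2 ≤ q) (hℓ : 1 ≤ ℓ) (hr : 1 ≤ r) (hn : 1 ≤ n) :
    (∀ x ∈ C q ℓ r n, ∀ z, IsOutput ℓ r x z → f ℓ r z = x) ∧
      (∀ u i : ℕ, 1 ≤ i → i ≤ ℓ → i % ℓ = (u + 1) % ℓ →
        g ℓ r u = L ℓ r i (Nat.log (r * ℓ + 1) ((r * (u + 1) + 1) / (r * i + 1)))) := by
  constructor
  · rintro x ⟨_, bs, hbs, rfl⟩ z hz
    exact main_decode q ℓ r hℓ hr bs hbs z hz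
  · intro u i h1 h2 h3
    exact g_formula ℓ r i u hℓ hr h1 h2 h3

end ZeroErrorDup
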